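/- Let G = (V, E) be a finite simple graph, let M be a matching in G, and let ℓ ≥ 0 be an integer. Let 𝒵 be a family of subsets of V such that for any two disjoint sets A, B ⊆ V with |A| + |B| ≤ 2ℓ+2 there exists Z ∈ 𝒵 with A ⊆ Z and B ∩ Z = ∅. For Z ⊆ V, let G_Z denote the spanning subgraph of G whose edges are those uv ∈ E with exactly one of u, v in Z. Let Γ be a collection of pairwise vertex-disjoint M-augmenting paths of length 2ℓ+1 in G such that, for every Z ∈ 𝒵, every M-augmenting path of length 2ℓ+1 in G_Z shares a vertex with some path in Γ. Then every M-augmenting path of length 2ℓ+1 in G shares a vertex with some path in Γ. -/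

import Mathlib

/-- A vertex is covered by a set of edges if it lies in one of them. -/
def CoveredBy {V : Type*} (M : Set (Sym2 V)) (v : V) : Prop :=
  ∃ e ∈ M, v ∈ e

/-- A matching of `G`: a set of edges of `G`, no two of which share an endpoint. -/
def IsMatching {V : Type*} (G : SimpleGraph V) (M : Set (Sym2 V)) : Prop :=
  M ⊆ G.edgeSet ∧ ∀ e ∈ M, ∀ f ∈ M, e ≠ f → ∀ v : V, v ∈ e → v ∉ f

/-- An `M`-augmenting walk of length `2k+1` in `G`, encoded by its vertex sequence
`w 0, w 1, …, w (2k+1)`: consecutive vertices are adjacent, the first and last vertices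
are not covered by `M`, and the edges lie alternately outside `M` and in `M`. -/
def IsAugWalk {V : Type*} (G : SimpleGraph V) (M : Set (Sym2 V)) (k : ℕ) (w : ℕ → V) : Prop :=
  (∀ i < 2 * k + 1, G.Adj (w i) (w (i + 1))) ∧
  ¬ CoveredBy M (w 0) ∧ ¬ CoveredBy M (w (2 * k + 1)) ∧
  (∀ i, 2 * i < 2 * k + 1 → s(w (2 * i), w (2 * i + 1)) ∉ M) ∧
  (∀ i, 2 * i + 1 < 2 * k + 1 → s(w (2 * i + 1), w (2 * i + 2)) ∈ M)

/-- An `M`-augmenting path of length `2k+1`: an `M`-augmenting walk with pairwise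
distinct vertices. -/
def IsAugPath {V : Type*} (G : SimpleGraph V) (M : Set (Sym2 V)) (k : ℕ) (w : ℕ → V) : Prop :=
  IsAugWalk G M k w ∧
    ∀ i ≤ 2 * k + 1, ∀ j ≤ 2 * k + 1, w i = w j → i = j

/-- The spanning subgraph of `G` whose edges are those of `G` with exactly one endpoint
in `Z`. -/
def CrossSubgraph {V : Type*} (G : SimpleGraph V) (Z : Set V) : SimpleGraph V where
  Adj u v := G.Adj u v ∧ ¬ (u ∈ Z ↔ v ∈ Z)
  symm := by
    constructor
    intro u v h
    exact ⟨h.1.symm, fun hiff => h.2 hiff.symm⟩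
  loopless := by
    constructor
    intro v h
    exact G.irrefl h.1

/-- a collection of vertex-disjoint length-`(2ℓ+1)` augmenting paths that is
maximal in every bipartite subgraph `G_Z` over a separating family `𝒵` is maximal in `G`. -/
theorem stmt_14 {V : Type*} [Fintype V] (G : SimpleGraph V)
    (M : Set (Sym2 V)) (hM : IsMatching G M) (ℓ : ℕ)
    (𝒵 : Set (Set V))
    (hsep : ∀ A B : Set V, Disjoint A B → A.ncard + B.ncard ≤ 2 * ℓ + 2 →
      ∃ Z ∈ 𝒵, A ⊆ Z ∧ B ∩ Z = (∅ : Set V))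
    (m : ℕ) (P : ℕ → ℕ → V)
    (hP : ∀ i < m, IsAugPath G M ℓ (P i))
    (hdisj : ∀ i < m, ∀ j < m, i ≠ j →
      ∀ a ≤ 2 * ℓ + 1, ∀ b ≤ 2 * ℓ + 1, P i a ≠ P j b)
    (hmax : ∀ Z ∈ 𝒵, ∀ w : ℕ → V, IsAugPath (CrossSubgraph G Z) M ℓ w →
      ∃ i < m, ∃ a ≤ 2 * ℓ + 1, ∃ b ≤ 2 * ℓ + 1, w a = P i b) :
    ∀ w : ℕ → V, IsAugPath G M ℓ w →
      ∃ i < m, ∃ a ≤ 2 * ℓ + 1, ∃ b ≤ 2 * ℓ + 1, w a = P i b := by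
  classical
  intro w hw
  obtain ⟨⟨hadj, h0, hend, hout, hin⟩, hinj⟩ := hw
  set A : Set V := ↑((Finset.range (ℓ+1)).image (fun i => w (2*i))) with hA
  set B : Set V := ↑((Finset.range (ℓ+1)).image (fun i => w (2*i+1))) with hB
  have hdisjAB : Disjoint A B := by
    rw [Set.disjoint_left]
    rintro x hxA hxB
    simp only [hA, hB, Finset.coe_image, Finset.coe_range, Set.mem_image,
      Set.mem_Iio] at hxA hxB
    obtain ⟨i, hi, rfl⟩ := hxA
    obtain ⟨j, hj, hji⟩ := hxB
    have := hinj (2*j+1) (by omega) (2*i) (by omega) hji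
    omega
  have hcard : A.ncard + B.ncard ≤ 2*ℓ+2 := by
    have h1 : A.ncard ≤ ℓ+1 := by
      rw [hA, Set.ncard_coe_finset]
      exact Finset.card_image_le.trans (by simp)
    have h2 : B.ncard ≤ ℓ+1 := by
      rw [hB, Set.ncard_coe_finset]
      exact Finset.card_image_le.trans (by simp)
    omega
  obtain ⟨Z, hZ, hAZ, hBZ⟩ := hsep A B hdisjAB hcard
  have hmemA : ∀ i ≤ ℓ, w (2*i) ∈ Z := by
    intro i hi
    apply hAZ
    simp only [hA, Finset.coe_image, Finset.coe_range, Set.mem_image, Set.mem_Iio]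
    exact ⟨i, by omega, rfl⟩
  have hmemB : ∀ i ≤ ℓ, w (2*i+1) ∉ Z := by
    intro i hi hmem
    have hx : w (2*i+1) ∈ B ∩ Z := by
      refine ⟨?_, hmem⟩
      simp only [hB, Finset.coe_image, Finset.coe_range, Set.mem_image, Set.mem_Iio]
      exact ⟨i, by omega, rfl⟩
    rw [hBZ] at hx
    exact hx
  apply hmax Z hZ w
  refine ⟨⟨?_, h0, hend, hout, hin⟩, hinj⟩
  intro i hi
  refine ⟨hadj i hi, ?_⟩
  rcases Nat.even_or_odd i with ⟨j, hj⟩ | ⟨j, hj⟩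
  · have hiz : w i ∈ Z := by
      have := hmemA j (by omega)
      rwa [show 2*j = i by omega] at this
    have hiz' : w (i+1) ∉ Z := by
      have := hmemB j (by omega)
      rwa [show 2*j+1 = i+1 by omega] at this
    tauto
  · have hiz : w i ∉ Z := by
      have := hmemB j (by omega)
      rwa [show 2*j+1 = i by omega] at this
    have hiz' : w (i+1) ∈ Z := by
      have := hmemA (j+1) (by omega)
      rwa [show 2*(j+1) = i+1 by omega] at this
    tauto
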